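/- Let M be a complex vector space (not assumed graded) with a linear map Y_M(·,x) satisfying the truncation condition, and suppose weak commutativity holds for Y_M for all pairs u, v ∈ V with exponents k(u,v) ∈ ℕ. Then for all u, v, w ∈ V and φ ∈ M there exists a (nonunique) element F(u,v,w,φ;x_0,x_4,x_5,x_1,x_2,x_3) of M((x_0,x_4,x_5,x_1^{1/p},x_2^{1/p},x_3^{1/p})) such that x_0^{k(u,v)} F ∈ M[[x_0]]((x_4,x_5,x_1^{1/p},x_2^{1/p},x_3^{1/p})), x_4^{k(u,w)} F ∈ M[[x_4]]((x_0,x_5,x_1^{1/p},x_2^{1/p},x_3^{1/p})), x_5^{k(v,w)} F ∈ M[[x_5]]((x_0,x_4,x_1^{1/p},x_2^{1/p},x_3^{1/p})), and Y_M(u,x_1)Y_M(v,x_2)Y_M(w,x_3)φ = F(u,v,w,φ;x_1−x_2,x_1−x_3,x_2−x_3,x_1,x_2,x_3), all substitutions taken with the binomial expansion convention. -/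

import Mathlib

noncomputable section

open scoped BigOperators

/-- Generalized binomial coefficient `z(z-1)⋯(z-k+1)/k!`. -/
def cbinom (z : ℂ) (k : ℕ) : ℂ :=
  (∏ j ∈ Finset.range k, (z - (j : ℂ))) / (k.factorial : ℂ)

/-- Generalized binomial coefficient with integer lower index (zero for negative index). -/
def cbinomZ (z : ℂ) (k : ℤ) : ℂ := if 0 ≤ k then cbinom z k.toNat else 0

/-- A vertex operator algebra `(V, Y, 𝟙, ω)` over `ℂ`, described in terms of the modes
`vₙ = Y v n` of the vertex operators `Y(v,x) = ∑ₙ vₙ x^{-n-1}`.  The Jacobi identity is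
expressed in its equivalent component (Borcherds identity) form: it is the equality of the
coefficients of `x₀^{-n-1} x₁^{-a-1} x₂^{-b-1}` on the two sides of the formal-variable
Jacobi identity, with all binomials expanded by the binomial expansion convention. -/
structure VOA (V : Type) [AddCommGroup V] [Module ℂ V] where
  Y : V →ₗ[ℂ] ℤ → Module.End ℂ V
  vac : V
  conf : V
  cc : ℂ
  grade : ℤ → Submodule ℂ V
  internal : DirectSum.IsInternal grade
  findim : ∀ n : ℤ, FiniteDimensional ℂ (grade n)
  bddBelow : ∃ N : ℤ, ∀ n < N, grade n = ⊥
  trunc : ∀ u v : V, ∃ N : ℤ, ∀ n ≥ N, Y u n v = 0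
  vacuum : ∀ n : ℤ, Y vac n = if n = -1 then 1 else 0
  creation_zero : ∀ (v : V) (n : ℤ), 0 ≤ n → Y v n vac = 0
  creation_id : ∀ v : V, Y v (-1) vac = v
  virasoro : ∀ m n : ℤ,
    Y conf (m + 1) * Y conf (n + 1) - Y conf (n + 1) * Y conf (m + 1)
      = ((m - n : ℤ) : ℂ) • Y conf (m + n + 1)
        + (if m + n = 0 then ((m ^ 3 - m : ℤ) : ℂ) / 12 * cc else 0) •
            (1 : Module.End ℂ V)
  L0_grade : ∀ n : ℤ, ∀ v ∈ grade n, Y conf 1 v = (n : ℂ) • v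
  L_neg_one : ∀ (u : V) (n : ℤ), Y (Y conf 0 u) n = (-n : ℂ) • Y u (n - 1)
  jacobi : ∀ (u v w : V) (a n b : ℤ),
    (∑ᶠ i : ℕ, cbinom (a : ℂ) i • Y (Y u (n + i) v) (a + b - i) w)
      = (∑ᶠ i : ℕ, ((-1 : ℂ) ^ i * cbinom (n : ℂ) i) • Y u (a + n - i) (Y v (b + i) w))
        - (-1 : ℂ) ^ n •
            (∑ᶠ i : ℕ, ((-1 : ℂ) ^ i * cbinom (n : ℂ) i) • Y v (b + n - i) (Y u (a + i) w))

variable {V W : Type} [AddCommGroup V] [Module ℂ V] [AddCommGroup W] [Module ℂ W]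

/-- Truncation condition for a module-type vertex operator map. -/
def TruncW (YW : V →ₗ[ℂ] ℤ → Module.End ℂ W) : Prop :=
  ∀ (v : V) (w : W), ∃ N : ℤ, ∀ n ≥ N, YW v n w = 0

/-- The Jacobi identity for a module map `Y_W`, in component form. -/
def JacobiW (𝒜 : VOA V) (YW : V →ₗ[ℂ] ℤ → Module.End ℂ W) : Prop :=
  ∀ (u v : V) (w : W) (a n b : ℤ),
    (∑ᶠ i : ℕ, cbinom (a : ℂ) i • YW (𝒜.Y u (n + i) v) (a + b - i) w)
      = (∑ᶠ i : ℕ, ((-1 : ℂ) ^ i * cbinom (n : ℂ) i) • YW u (a + n - i) (YW v (b + i) w))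
        - (-1 : ℂ) ^ n •
            (∑ᶠ i : ℕ, ((-1 : ℂ) ^ i * cbinom (n : ℂ) i) • YW v (b + n - i) (YW u (a + i) w))

section Twisted

variable {V M : Type} [AddCommGroup V] [Module ℂ V] [AddCommGroup M] [Module ℂ M]

/-- Truncation condition for a twisted-module-type vertex operator map.  Here, for a fixed
period `p`, the map `Y_M` is encoded by its modes in `(1/p)ℤ`, rescaled by `p`:
`YM v N` is the mode `v^ν_{N/p}`, the coefficient of `x^{-N/p-1}` in `Y_M(v,x)`. -/
def TwTrunc (YM : V →ₗ[ℂ] ℤ → Module.End ℂ M) : Prop :=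
  ∀ (v : V) (w : M), ∃ N : ℤ, ∀ n ≥ N, YM v n w = 0

/-- The twisted Jacobi identity in component form: the equality of the coefficients of
`x₀^{-n-1} x₁^{-a/p-1} x₂^{-b/p-1}` on the two sides of the twisted Jacobi identity,
with all binomials expanded by the binomial expansion convention. -/
def TwJacobi (p : ℕ) (𝒜 : VOA V) (ν : V ≃ₗ[ℂ] V) (ωp : ℂ)
    (YM : V →ₗ[ℂ] ℤ → Module.End ℂ M) : Prop :=
  ∀ (u v : V) (w : M) (n a b : ℤ),
    (∑ᶠ i : ℕ, ((-1 : ℂ) ^ i * cbinom (n : ℂ) i) •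
        YM u (a + (p : ℤ) * (n - i)) (YM v (b + (p : ℤ) * i) w))
      - (-1 : ℂ) ^ n •
          (∑ᶠ i : ℕ, ((-1 : ℂ) ^ i * cbinom (n : ℂ) i) •
            YM v (b + (p : ℤ) * (n - i)) (YM u (a + (p : ℤ) * i) w))
      = (p : ℂ)⁻¹ • ∑ r ∈ Finset.range p, ωp ^ (-(r : ℤ) * a) •
          (∑ᶠ i : ℕ, cbinom ((a : ℂ) / (p : ℂ)) i •
            YM (𝒜.Y ((ν ^ r) u) (n + i) v) (a + b - (p : ℤ) * i) w)

/-- Weak commutativity for twisted vertex operators with exponent `k`: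
`(x₁-x₂)^k Y_M(u,x₁)Y_M(v,x₂) = (x₁-x₂)^k Y_M(v,x₂)Y_M(u,x₁)`, as the equality of the
coefficients of `x₁^{a/p} x₂^{b/p}` (endomorphism-valued). -/
def TwWC (p : ℕ) (YM : V →ₗ[ℂ] ℤ → Module.End ℂ M) (k : ℕ) (u v : V) : Prop :=
  ∀ a b : ℤ,
    (∑ᶠ i : ℕ, ((-1 : ℂ) ^ i * cbinom (k : ℂ) i) •
        (YM u ((p : ℤ) * ((k : ℤ) - i) - a - p) * YM v ((p : ℤ) * i - b - p)))
      = ∑ᶠ i : ℕ, ((-1 : ℂ) ^ i * cbinom (k : ℂ) i) •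
          (YM v ((p : ℤ) * i - b - p) * YM u ((p : ℤ) * ((k : ℤ) - i) - a - p))

/-- Modified weak associativity for twisted vertex operators with exponent `k`:
`lim_{x₁^{1/p} → ωₚ^s (x₂+x₀)^{1/p}} ((x₁-x₂)^k Y_M(u,x₁)Y_M(v,x₂))
   = x₀^k Y_M(Y(ν^{-s}u,x₀)v,x₂)` for all `s ∈ ℤ`, stated as the equality of the
coefficients of `x₀^n x₂^{C/p}` applied to an arbitrary vector `w`.  In the formal limit,
each integral power of `x₁^{1/p}` is replaced by the corresponding binomially expanded
power of `ωₚ^s (x₂+x₀)^{1/p}`. -/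
def TwMWA (p : ℕ) (𝒜 : VOA V) (ν : V ≃ₗ[ℂ] V) (ωp : ℂ)
    (YM : V →ₗ[ℂ] ℤ → Module.End ℂ M) (k : ℕ) (u v : V) : Prop :=
  ∀ (s n C : ℤ) (w : M),
    (∑ᶠ a : ℤ, (ωp ^ (s * a) * cbinomZ ((a : ℂ) / (p : ℂ)) n) •
        (∑ᶠ i : ℕ, ((-1 : ℂ) ^ i * cbinom (k : ℂ) i) •
          YM u ((p : ℤ) * ((k : ℤ) - i) - a - p)
            (YM v ((p : ℤ) * i - (C - a + (p : ℤ) * n) - p) w)))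
      = YM (𝒜.Y ((ν ^ (-s)) u) ((k : ℤ) - n - 1) v) (-C - p) w

end Twisted

section S10

variable {V M : Type} [AddCommGroup V] [Module ℂ V] [AddCommGroup M] [Module ℂ M]

/-- `F ∈ M((x₀,x₄,x₅,x₁^{1/p},x₂^{1/p},x₃^{1/p}))`: `F n₀ n₄ n₅ N₁ N₂ N₃` is the
coefficient of `x₀^{n₀} x₄^{n₄} x₅^{n₅} x₁^{N₁/p} x₂^{N₂/p} x₃^{N₃/p}`, and there are
only finitely many negative powers of each variable, with a common bound. -/
def TwIsLaurent6 (F : ℤ → ℤ → ℤ → ℤ → ℤ → ℤ → M) : Prop :=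
  ∃ N : ℕ, ∀ n0 n4 n5 N1 N2 N3 : ℤ,
    (n0 < -(N : ℤ) ∨ n4 < -(N : ℤ) ∨ n5 < -(N : ℤ) ∨
     N1 < -(N : ℤ) ∨ N2 < -(N : ℤ) ∨ N3 < -(N : ℤ)) → F n0 n4 n5 N1 N2 N3 = 0


section CbinomLemmas

lemma cbinom_zero (z : ℂ) : cbinom z 0 = 1 := by simp [cbinom]

lemma cbinom_nat_eq_zero {n i : ℕ} (h : n < i) : cbinom (n : ℂ) i = 0 := by
  have : ((n : ℂ) - (n : ℕ)) = 0 := by simp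
  rw [cbinom, Finset.prod_eq_zero (Finset.mem_range.2 h) this, zero_div]

/-- Pascal's rule. -/
lemma cbinom_succ (z : ℂ) (s : ℕ) :
    cbinom z (s + 1) = cbinom (z - 1) s + cbinom (z - 1) (s + 1) := by
  have hfac : ((s.factorial : ℂ)) ≠ 0 := by exact_mod_cast s.factorial_ne_zero
  have hfac1 : (((s+1).factorial : ℂ)) ≠ 0 := by exact_mod_cast (s+1).factorial_ne_zero
  have hprod : ∏ j ∈ Finset.range (s + 1), (z - (j : ℂ))
      = z * ∏ j ∈ Finset.range s, (z - 1 - (j : ℂ)) := by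
    rw [Finset.prod_range_succ' (fun j => z - (j : ℂ))]
    simp only [Nat.cast_zero, sub_zero, Nat.cast_add, Nat.cast_one]
    rw [mul_comm]
    congr 1
    apply Finset.prod_congr rfl
    intro j _; ring
  rw [cbinom, cbinom, cbinom, hprod]
  rw [Finset.prod_range_succ (fun j => z - 1 - (j : ℂ))]
  have hf : ((s+1).factorial : ℂ) = (s.factorial : ℂ) * (s + 1 : ℂ) := by
    rw [Nat.factorial_succ]; push_cast; ring
  field_simp
  rw [hf]
  ring

lemma cbinom_zero_left (j : ℕ) : cbinom (0 : ℂ) j = if j = 0 then 1 else 0 := by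
  cases j with
  | zero => simp [cbinom_zero]
  | succ m =>
    have := cbinom_nat_eq_zero (n := 0) (i := m + 1) (Nat.succ_pos m)
    simpa using this

lemma cbinom_vand_nat (x : ℂ) (m : ℕ) : ∀ s : ℕ,
    ∑ i ∈ Finset.range (s + 1), cbinom x i * cbinom ((m : ℕ) : ℂ) (s - i)
      = cbinom (x + m) s := by
  induction m with
  | zero =>
    intro s
    rw [Finset.sum_eq_single s]
    · simp [cbinom_zero_left, cbinom_zero]
    · intro i hi hne
      have : s - i ≠ 0 := by
        have := Finset.mem_range.1 hi; omega
      simp [cbinom_zero_left, this]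
    · intro h; exact absurd (Finset.self_mem_range_succ s) h
  | succ m ih =>
    intro s
    cases s with
    | zero => simp [cbinom_zero]
    | succ t =>
      have key : ∀ i ∈ Finset.range (t + 1 + 1),
          cbinom x i * cbinom ((m+1 : ℕ) : ℂ) (t + 1 - i)
            = cbinom x i * cbinom ((m : ℕ) : ℂ) (t + 1 - i)
              + (if i ≤ t then cbinom x i * cbinom ((m : ℕ) : ℂ) (t - i) else 0) := by
        intro i hi
        have hi' : i ≤ t + 1 := by have := Finset.mem_range.1 hi; omega
        by_cases h : i ≤ t
        · have h1 : t + 1 - i = (t - i) + 1 := by omega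
          rw [if_pos h, h1]
          have := cbinom_succ (((m+1 : ℕ) : ℂ)) (t - i)
          have hc : ((m + 1 : ℕ) : ℂ) - 1 = ((m : ℕ) : ℂ) := by push_cast; ring
          rw [this, hc]; ring
        · have h1 : i = t + 1 := by omega
          subst h1
          simp [cbinom_zero]
      rw [Finset.sum_congr rfl key, Finset.sum_add_distrib]
      have h2 : ∑ i ∈ Finset.range (t + 1 + 1),
          (if i ≤ t then cbinom x i * cbinom ((m : ℕ) : ℂ) (t - i) else 0)
          = ∑ i ∈ Finset.range (t + 1), cbinom x i * cbinom ((m : ℕ) : ℂ) (t - i) := by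
        rw [Finset.sum_range_succ, if_neg (by omega)]
        rw [add_zero]
        apply Finset.sum_congr rfl
        intro i hi
        rw [if_pos (by have := Finset.mem_range.1 hi; omega)]
      rw [h2, ih (t+1), ih t]
      have hc : x + ((m+1 : ℕ) : ℂ) = (x + m) + 1 := by push_cast; ring
      rw [hc]
      have := cbinom_succ (x + (m:ℂ) + 1) (t)
      simp only [add_sub_cancel_right] at this
      rw [this]; ring

/-- The key collapse identity. -/
lemma cbinom_collapse (k : ℕ) (s : ℕ) :
    ∑ i ∈ Finset.range (s + 1),
      ((-1 : ℂ) ^ i * cbinom (-(k : ℂ)) i) * ((-1 : ℂ) ^ (s - i) * cbinom ((k:ℕ) : ℂ) (s - i))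
      = if s = 0 then 1 else 0 := by
  have h1 : ∀ i ∈ Finset.range (s + 1),
      ((-1 : ℂ) ^ i * cbinom (-(k : ℂ)) i) * ((-1 : ℂ) ^ (s - i) * cbinom ((k:ℕ) : ℂ) (s - i))
        = (-1 : ℂ) ^ s * (cbinom (-(k : ℂ)) i * cbinom ((k:ℕ) : ℂ) (s - i)) := by
    intro i hi
    have : (-1 : ℂ) ^ i * (-1 : ℂ) ^ (s - i) = (-1 : ℂ) ^ s := by
      rw [← pow_add]; congr 1; have := Finset.mem_range.1 hi; omega
    calc ((-1 : ℂ) ^ i * cbinom (-(k : ℂ)) i) * ((-1 : ℂ) ^ (s - i) * cbinom ((k:ℕ) : ℂ) (s - i))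
        = ((-1 : ℂ) ^ i * (-1:ℂ)^(s-i)) * (cbinom (-(k : ℂ)) i * cbinom ((k:ℕ) : ℂ) (s - i)) := by ring
      _ = _ := by rw [this]
  rw [Finset.sum_congr rfl h1, ← Finset.mul_sum, cbinom_vand_nat (-(k:ℂ)) k s]
  have : -(k : ℂ) + ((k:ℕ) : ℂ) = (0 : ℂ) := by push_cast; ring
  rw [this, cbinom_zero_left]
  by_cases h : s = 0 <;> simp [h]


end CbinomLemmas

section AuxReindex
variable {α : Type*} [AddCommMonoid α] [Module ℂ α]

/-- Convolution coefficient for the product of two binomial series. -/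
def Acoef (Ibd K : ℕ) (e b : ℕ → ℂ) (s : ℕ) : ℂ :=
  ∑ m ∈ Finset.range (K + 1), if m ≤ s ∧ s - m ≤ Ibd then e (s - m) * b m else 0

lemma pair_reindex (I K : ℕ) (e b : ℕ → ℂ) (g : ℕ → α) :
    ∑ i ∈ Finset.range (I + 1), ∑ m ∈ Finset.range (K + 1), (e i * b m) • g (i + m)
      = ∑ s ∈ Finset.range (I + K + 1),
          (∑ m ∈ Finset.range (K + 1),
            if m ≤ s ∧ s - m ≤ I then e (s - m) * b m else 0) • g s := by
  have h0 : ∀ s, (∑ m ∈ Finset.range (K + 1),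
      if m ≤ s ∧ s - m ≤ I then e (s - m) * b m else 0) • g s
      = ∑ m ∈ Finset.range (K + 1),
          (if m ≤ s ∧ s - m ≤ I then e (s - m) * b m else 0) • g s := by
    intro s; rw [Finset.sum_smul]
  simp only [h0]
  rw [Finset.sum_comm (s := Finset.range (I + K + 1))]
  rw [Finset.sum_comm (s := Finset.range (I + 1))]
  apply Finset.sum_congr rfl
  intro m hm
  have hmK : m ≤ K := by have := Finset.mem_range.1 hm; omega
  have himg : (Finset.range (I + 1)).image (· + m) ⊆ Finset.range (I + K + 1) := by
    intro s hs
    obtain ⟨i, hi, rfl⟩ := Finset.mem_image.1 hs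
    have := Finset.mem_range.1 hi
    exact Finset.mem_range.2 (by omega)
  rw [← Finset.sum_subset himg (by
    intro s _ hs
    have hns : ¬ (m ≤ s ∧ s - m ≤ I) := by
      intro ⟨h1, h2⟩
      exact hs (Finset.mem_image.2 ⟨s - m, Finset.mem_range.2 (by omega), by omega⟩)
    rw [if_neg hns, zero_smul])]
  rw [Finset.sum_image (by intro a _ c _ h; simp only at h; omega)]
  apply Finset.sum_congr rfl
  intro i hi
  rw [if_pos ⟨by omega, by have := Finset.mem_range.1 hi; omega⟩]
  have h2 : i + m - m = i := by omega
  rw [h2]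

lemma pair_reindex' (I K : ℕ) (e b : ℕ → ℂ) (g : ℕ → α) :
    ∑ i ∈ Finset.range (I + 1), e i • ∑ m ∈ Finset.range (K + 1), b m • g (i + m)
      = ∑ s ∈ Finset.range (I + K + 1), Acoef I K e b s • g s := by
  have h1 : ∀ i, e i • ∑ m ∈ Finset.range (K + 1), b m • g (i + m)
      = ∑ m ∈ Finset.range (K + 1), (e i * b m) • g (i + m) := by
    intro i
    rw [Finset.smul_sum]
    exact Finset.sum_congr rfl fun m _ => smul_smul _ _ _
  simp only [h1]
  exact pair_reindex I K e b g

lemma smul_swap (s t : Finset ℕ) (a b : ℕ → ℂ) (g : ℕ → ℕ → α) :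
    ∑ l ∈ s, a l • ∑ m ∈ t, b m • g l m = ∑ m ∈ t, b m • ∑ l ∈ s, a l • g l m := by
  simp only [Finset.smul_sum]
  rw [Finset.sum_comm]
  exact Finset.sum_congr rfl fun m _ => Finset.sum_congr rfl fun l _ => smul_comm _ _ _

set_option maxHeartbeats 1000000 in
lemma six_collapse (I J L K1 K2 K3 : ℕ) (e1 e2 e3 b1 b2 b3 : ℕ → ℂ) (Q : ℕ → ℕ → ℕ → α) :
    ∑ i ∈ Finset.range (I + 1), e1 i • ∑ j ∈ Finset.range (J + 1), e2 j •
      ∑ l ∈ Finset.range (L + 1), e3 l • ∑ m ∈ Finset.range (K1 + 1), b1 m •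
        ∑ n ∈ Finset.range (K2 + 1), b2 n • ∑ r ∈ Finset.range (K3 + 1), b3 r •
          Q (i + m) (j + n) (l + r)
    = ∑ s ∈ Finset.range (I + K1 + 1), Acoef I K1 e1 b1 s •
        ∑ t ∈ Finset.range (J + K2 + 1), Acoef J K2 e2 b2 t •
          ∑ z ∈ Finset.range (L + K3 + 1), Acoef L K3 e3 b3 z • Q s t z := by
  have h3 : ∀ s t : ℕ,
      ∑ l ∈ Finset.range (L + 1), e3 l • ∑ r ∈ Finset.range (K3 + 1), b3 r • Q s t (l + r)
        = ∑ z ∈ Finset.range (L + K3 + 1), Acoef L K3 e3 b3 z • Q s t z :=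
    fun s t => pair_reindex' L K3 e3 b3 (fun z => Q s t z)
  have h2 : ∀ s : ℕ,
      ∑ j ∈ Finset.range (J + 1), e2 j • ∑ l ∈ Finset.range (L + 1), e3 l •
          ∑ n ∈ Finset.range (K2 + 1), b2 n • ∑ r ∈ Finset.range (K3 + 1), b3 r •
            Q s (j + n) (l + r)
        = ∑ t ∈ Finset.range (J + K2 + 1), Acoef J K2 e2 b2 t •
            ∑ z ∈ Finset.range (L + K3 + 1), Acoef L K3 e3 b3 z • Q s t z := by
    intro s
    have hswap : ∀ j,
        ∑ l ∈ Finset.range (L + 1), e3 l • ∑ n ∈ Finset.range (K2 + 1), b2 n •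
          (fun l n => ∑ r ∈ Finset.range (K3 + 1), b3 r • Q s (j + n) (l + r)) l n
        = ∑ n ∈ Finset.range (K2 + 1), b2 n • ∑ l ∈ Finset.range (L + 1), e3 l •
            (fun l n => ∑ r ∈ Finset.range (K3 + 1), b3 r • Q s (j + n) (l + r)) l n :=
      fun j => smul_swap (Finset.range (L + 1)) (Finset.range (K2 + 1)) e3 b2
        (fun l n => ∑ r ∈ Finset.range (K3 + 1), b3 r • Q s (j + n) (l + r))
    have step1 : ∑ j ∈ Finset.range (J + 1), e2 j • ∑ l ∈ Finset.range (L + 1), e3 l •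
          ∑ n ∈ Finset.range (K2 + 1), b2 n • ∑ r ∈ Finset.range (K3 + 1), b3 r •
            Q s (j + n) (l + r)
        = ∑ j ∈ Finset.range (J + 1), e2 j • ∑ n ∈ Finset.range (K2 + 1), b2 n •
            ∑ l ∈ Finset.range (L + 1), e3 l • ∑ r ∈ Finset.range (K3 + 1), b3 r •
              Q s (j + n) (l + r) :=
      Finset.sum_congr rfl fun j _ => congrArg (e2 j • ·) (hswap j)
    rw [step1]
    rw [pair_reindex' J K2 e2 b2 (fun t => ∑ l ∈ Finset.range (L + 1), e3 l •
      ∑ r ∈ Finset.range (K3 + 1), b3 r • Q s t (l + r))]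
    exact Finset.sum_congr rfl fun t _ => congrArg (Acoef J K2 e2 b2 t • ·) (h3 s t)
  have hstep : ∀ i : ℕ,
      ∑ j ∈ Finset.range (J + 1), e2 j • ∑ l ∈ Finset.range (L + 1), e3 l •
          ∑ m ∈ Finset.range (K1 + 1), b1 m • ∑ n ∈ Finset.range (K2 + 1), b2 n •
            ∑ r ∈ Finset.range (K3 + 1), b3 r • Q (i + m) (j + n) (l + r)
        = ∑ m ∈ Finset.range (K1 + 1), b1 m • ∑ j ∈ Finset.range (J + 1), e2 j •
            ∑ l ∈ Finset.range (L + 1), e3 l • ∑ n ∈ Finset.range (K2 + 1), b2 n •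
              ∑ r ∈ Finset.range (K3 + 1), b3 r • Q (i + m) (j + n) (l + r) := by
    intro i
    have hs1 : ∀ j,
        ∑ l ∈ Finset.range (L + 1), e3 l • ∑ m ∈ Finset.range (K1 + 1), b1 m •
          (fun l m => ∑ n ∈ Finset.range (K2 + 1), b2 n •
            ∑ r ∈ Finset.range (K3 + 1), b3 r • Q (i + m) (j + n) (l + r)) l m
        = ∑ m ∈ Finset.range (K1 + 1), b1 m • ∑ l ∈ Finset.range (L + 1), e3 l •
            (fun l m => ∑ n ∈ Finset.range (K2 + 1), b2 n •
              ∑ r ∈ Finset.range (K3 + 1), b3 r • Q (i + m) (j + n) (l + r)) l m :=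
      fun j => smul_swap (Finset.range (L + 1)) (Finset.range (K1 + 1)) e3 b1
        (fun l m => ∑ n ∈ Finset.range (K2 + 1), b2 n •
          ∑ r ∈ Finset.range (K3 + 1), b3 r • Q (i + m) (j + n) (l + r))
    have s1 : ∑ j ∈ Finset.range (J + 1), e2 j • ∑ l ∈ Finset.range (L + 1), e3 l •
          ∑ m ∈ Finset.range (K1 + 1), b1 m • ∑ n ∈ Finset.range (K2 + 1), b2 n •
            ∑ r ∈ Finset.range (K3 + 1), b3 r • Q (i + m) (j + n) (l + r)
        = ∑ j ∈ Finset.range (J + 1), e2 j • ∑ m ∈ Finset.range (K1 + 1), b1 m •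
            ∑ l ∈ Finset.range (L + 1), e3 l • ∑ n ∈ Finset.range (K2 + 1), b2 n •
              ∑ r ∈ Finset.range (K3 + 1), b3 r • Q (i + m) (j + n) (l + r) :=
      Finset.sum_congr rfl fun j _ => congrArg (e2 j • ·) (hs1 j)
    rw [s1]
    exact smul_swap (Finset.range (J + 1)) (Finset.range (K1 + 1)) e2 b1
      (fun j m => ∑ l ∈ Finset.range (L + 1), e3 l • ∑ n ∈ Finset.range (K2 + 1), b2 n •
        ∑ r ∈ Finset.range (K3 + 1), b3 r • Q (i + m) (j + n) (l + r))
  have s2 : ∑ i ∈ Finset.range (I + 1), e1 i • ∑ j ∈ Finset.range (J + 1), e2 j •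
        ∑ l ∈ Finset.range (L + 1), e3 l • ∑ m ∈ Finset.range (K1 + 1), b1 m •
          ∑ n ∈ Finset.range (K2 + 1), b2 n • ∑ r ∈ Finset.range (K3 + 1), b3 r •
            Q (i + m) (j + n) (l + r)
      = ∑ i ∈ Finset.range (I + 1), e1 i • ∑ m ∈ Finset.range (K1 + 1), b1 m •
          ∑ j ∈ Finset.range (J + 1), e2 j • ∑ l ∈ Finset.range (L + 1), e3 l •
            ∑ n ∈ Finset.range (K2 + 1), b2 n • ∑ r ∈ Finset.range (K3 + 1), b3 r •
              Q (i + m) (j + n) (l + r) :=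
    Finset.sum_congr rfl fun i _ => congrArg (e1 i • ·) (hstep i)
  rw [s2]
  rw [pair_reindex' I K1 e1 b1 (fun s => ∑ j ∈ Finset.range (J + 1), e2 j •
    ∑ l ∈ Finset.range (L + 1), e3 l • ∑ n ∈ Finset.range (K2 + 1), b2 n •
      ∑ r ∈ Finset.range (K3 + 1), b3 r • Q s (j + n) (l + r))]
  exact Finset.sum_congr rfl fun s _ => congrArg (Acoef I K1 e1 b1 s • ·) (h2 s)

lemma Acoef_delta (Ibd K s : ℕ) (hs : s ≤ Ibd) :
    Acoef Ibd K (fun i => (-1 : ℂ) ^ i * cbinom (-(K : ℂ)) i)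
      (fun m => (-1 : ℂ) ^ m * cbinom ((K : ℕ) : ℂ) m) s
      = if s = 0 then 1 else 0 := by
  unfold Acoef
  have step1 : ∑ m ∈ Finset.range (K + 1),
      (if m ≤ s ∧ s - m ≤ Ibd then
        ((-1 : ℂ) ^ (s - m) * cbinom (-(K : ℂ)) (s - m)) * ((-1 : ℂ) ^ m * cbinom ((K : ℕ) : ℂ) m)
      else 0)
      = ∑ m ∈ Finset.range (K + 1),
      (if m ≤ s then
        ((-1 : ℂ) ^ (s - m) * cbinom (-(K : ℂ)) (s - m)) * ((-1 : ℂ) ^ m * cbinom ((K : ℕ) : ℂ) m)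
      else 0) := by
    apply Finset.sum_congr rfl
    intro m _
    by_cases hm : m ≤ s
    · rw [if_pos ⟨hm, by omega⟩, if_pos hm]
    · rw [if_neg (fun hc => hm hc.1), if_neg hm]
  have step2 : ∑ m ∈ Finset.range (K + 1),
      (if m ≤ s then
        ((-1 : ℂ) ^ (s - m) * cbinom (-(K : ℂ)) (s - m)) * ((-1 : ℂ) ^ m * cbinom ((K : ℕ) : ℂ) m)
      else 0)
      = ∑ m ∈ Finset.range (K + s + 1),
      (if m ≤ s then
        ((-1 : ℂ) ^ (s - m) * cbinom (-(K : ℂ)) (s - m)) * ((-1 : ℂ) ^ m * cbinom ((K : ℕ) : ℂ) m)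
      else 0) := by
    apply Finset.sum_subset (Finset.range_subset_range.2 (by omega))
    intro x hx hx'
    have hxK : K < x := by
      have h1 := Finset.mem_range.1 hx
      have h2 : ¬ x < K + 1 := fun hc => hx' (Finset.mem_range.2 hc)
      omega
    by_cases hxs : x ≤ s
    · rw [if_pos hxs, cbinom_nat_eq_zero hxK]
      ring
    · rw [if_neg hxs]
  have step3 : ∑ m ∈ Finset.range (s + 1),
      (if m ≤ s then
        ((-1 : ℂ) ^ (s - m) * cbinom (-(K : ℂ)) (s - m)) * ((-1 : ℂ) ^ m * cbinom ((K : ℕ) : ℂ) m)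
      else 0)
      = ∑ m ∈ Finset.range (K + s + 1),
      (if m ≤ s then
        ((-1 : ℂ) ^ (s - m) * cbinom (-(K : ℂ)) (s - m)) * ((-1 : ℂ) ^ m * cbinom ((K : ℕ) : ℂ) m)
      else 0) := by
    apply Finset.sum_subset (Finset.range_subset_range.2 (by omega))
    intro x hx hx'
    have hxs : ¬ x ≤ s := by
      have h2 : ¬ x < s + 1 := fun hc => hx' (Finset.mem_range.2 hc)
      omega
    rw [if_neg hxs]
  have step4 : ∑ m ∈ Finset.range (s + 1),
      (if m ≤ s then
        ((-1 : ℂ) ^ (s - m) * cbinom (-(K : ℂ)) (s - m)) * ((-1 : ℂ) ^ m * cbinom ((K : ℕ) : ℂ) m)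
      else 0)
      = ∑ m ∈ Finset.range (s + 1),
        ((-1 : ℂ) ^ (s - m) * cbinom (-(K : ℂ)) (s - m)) * ((-1 : ℂ) ^ m * cbinom ((K : ℕ) : ℂ) m) := by
    apply Finset.sum_congr rfl
    intro m hm
    rw [if_pos (by have := Finset.mem_range.1 hm; omega)]
  have step5 : ∑ m ∈ Finset.range (s + 1),
      ((-1 : ℂ) ^ (s - m) * cbinom (-(K : ℂ)) (s - m)) * ((-1 : ℂ) ^ m * cbinom ((K : ℕ) : ℂ) m)
      = ∑ i ∈ Finset.range (s + 1),
        ((-1 : ℂ) ^ i * cbinom (-(K : ℂ)) i) * ((-1 : ℂ) ^ (s - i) * cbinom ((K : ℕ) : ℂ) (s - i)) := by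
    rw [← Finset.sum_range_reflect
      (fun i => ((-1 : ℂ) ^ i * cbinom (-(K : ℂ)) i) *
        ((-1 : ℂ) ^ (s - i) * cbinom ((K : ℕ) : ℂ) (s - i))) (s + 1)]
    apply Finset.sum_congr rfl
    intro m hm
    have hm' : m ≤ s := by have := Finset.mem_range.1 hm; omega
    have h1 : s + 1 - 1 - m = s - m := by omega
    have h2 : s - (s - m) = m := by omega
    rw [h1, h2]
  rw [step1, step2, ← step3, step4, step5]
  exact cbinom_collapse K s

end AuxReindex


section ApplyHelpers
variable {α : Type*} [AddCommMonoid α] [Module ℂ α]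

lemma finsum_coef_eq_sum (k : ℕ) (g : ℕ → α) :
    ∑ᶠ i : ℕ, ((-1 : ℂ) ^ i * cbinom (k : ℂ) i) • g i
      = ∑ i ∈ Finset.range (k + 1), ((-1 : ℂ) ^ i * cbinom (k : ℂ) i) • g i := by
  apply finsum_eq_sum_of_support_subset
  intro i hi
  simp only [Function.mem_support, ne_eq] at hi
  simp only [Finset.coe_range, Set.mem_Iio]
  by_contra h
  exact hi (by rw [cbinom_nat_eq_zero (by omega), mul_zero, zero_smul])


end ApplyHelpers

section TwApply
variable {V M : Type} [AddCommGroup V] [Module ℂ V] [AddCommGroup M] [Module ℂ M]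

lemma twwc_apply {p : ℕ} {YM : V →ₗ[ℂ] ℤ → Module.End ℂ M} {k : ℕ} {u v : V}
    (h : TwWC p YM k u v) (a b : ℤ) (ψ : M) :
    ∑ i ∈ Finset.range (k + 1), ((-1 : ℂ) ^ i * cbinom (k : ℂ) i) •
        YM u ((p : ℤ) * ((k : ℤ) - i) - a - p) (YM v ((p : ℤ) * i - b - p) ψ)
      = ∑ i ∈ Finset.range (k + 1), ((-1 : ℂ) ^ i * cbinom (k : ℂ) i) •
          YM v ((p : ℤ) * i - b - p) (YM u ((p : ℤ) * ((k : ℤ) - i) - a - p) ψ) := by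
  have h1 := h a b
  rw [finsum_coef_eq_sum, finsum_coef_eq_sum] at h1
  have h2 := congrArg (fun T : Module.End ℂ M => T ψ) h1
  simpa only [LinearMap.coe_sum, Finset.sum_apply, LinearMap.smul_apply,
     Module.End.mul_apply] using h2


end TwApply

set_option maxHeartbeats 1000000 in
/-- Lemma 5.5.  Weak commutativity for all pairs implies the existence,
for all `u, v, w ∈ V` and `φ ∈ M`, of a six-variable series `F` with pole bounds in
`x₀, x₄, x₅` governed by `k(u,v), k(u,w), k(v,w)` and with
`Y_M(u,x₁)Y_M(v,x₂)Y_M(w,x₃)φ = F(x₁-x₂, x₁-x₃, x₂-x₃, x₁, x₂, x₃)`,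
the substitution being the equality of the coefficients of `x₁^{A/p} x₂^{B/p} x₃^{C/p}`,
with each binomial `(xᵢ-xⱼ)^{n}` expanded in nonnegative integral powers of the second
variable. -/
theorem statement10 (p : ℕ) (hp : 0 < p) (𝒜 : VOA V) (ν : V ≃ₗ[ℂ] V)
    (hν_vac : ν 𝒜.vac = 𝒜.vac) (hν_conf : ν 𝒜.conf = 𝒜.conf)
    (hν_Y : ∀ (u : V) (n : ℤ) (v : V), ν (𝒜.Y u n v) = 𝒜.Y (ν u) n (ν v))
    (hν_per : ν ^ p = 1) (ωp : ℂ) (hωp : IsPrimitiveRoot ωp p)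
    (YM : V →ₗ[ℂ] ℤ → Module.End ℂ M)
    (hT : TwTrunc YM)
    (k : V → V → ℕ) (hWC : ∀ u v : V, TwWC p YM (k u v) u v) :
    ∀ (u v w : V) (φ : M), ∃ F : ℤ → ℤ → ℤ → ℤ → ℤ → ℤ → M,
      TwIsLaurent6 F ∧
      (∀ n0 n4 n5 N1 N2 N3 : ℤ, n0 < -(k u v : ℤ) → F n0 n4 n5 N1 N2 N3 = 0) ∧
      (∀ n0 n4 n5 N1 N2 N3 : ℤ, n4 < -(k u w : ℤ) → F n0 n4 n5 N1 N2 N3 = 0) ∧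
      (∀ n0 n4 n5 N1 N2 N3 : ℤ, n5 < -(k v w : ℤ) → F n0 n4 n5 N1 N2 N3 = 0) ∧
      (∀ A B C : ℤ,
        YM u (-A - p) (YM v (-B - p) (YM w (-C - p) φ))
          = ∑ᶠ q : (ℤ × ℤ × ℤ) × ℕ × ℕ × ℕ,
              ((-1 : ℂ) ^ (q.2.1 + q.2.2.1 + q.2.2.2) *
                cbinom (q.1.1 : ℂ) q.2.1 * cbinom (q.1.2.1 : ℂ) q.2.2.1 *
                cbinom (q.1.2.2 : ℂ) q.2.2.2) •
              F q.1.1 q.1.2.1 q.1.2.2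
                (A - (p : ℤ) * (q.1.1 - q.2.1) - (p : ℤ) * (q.1.2.1 - q.2.2.1))
                (B - (p : ℤ) * q.2.1 - (p : ℤ) * (q.1.2.2 - q.2.2.2))
                (C - (p : ℤ) * q.2.2.1 - (p : ℤ) * q.2.2.2)) := by
  intro u v w φ
  classical
  obtain ⟨Nu, hNu⟩ := hT u φ
  obtain ⟨Nv, hNv⟩ := hT v φ
  obtain ⟨Nw, hNw⟩ := hT w φ
  have hp1 : (1 : ℤ) ≤ (p : ℤ) := by exact_mod_cast hp
  have hppos : (0 : ℤ) ≤ (p : ℤ) := by positivity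
  have hpt : ∀ t : ℕ, (t : ℤ) ≤ (p : ℤ) * (t : ℤ) :=
    fun t => le_mul_of_one_le_left (by positivity) hp1
  have hptz : ∀ a b : ℕ, a ≤ b → (p : ℤ) * (a : ℤ) ≤ (p : ℤ) * (b : ℤ) :=
    fun a b h => mul_le_mul_of_nonneg_left (by exact_mod_cast h) hppos
  have hptnn : ∀ t : ℕ, (0 : ℤ) ≤ (p : ℤ) * (t : ℤ) := fun t => by positivity
  -- the regularized triple product
  set G : ℤ → ℤ → ℤ → M := fun a b c =>
    ∑ m ∈ Finset.range (k u v + 1), ((-1 : ℂ) ^ m * cbinom ((k u v : ℕ) : ℂ) m) •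
      ∑ n ∈ Finset.range (k u w + 1), ((-1 : ℂ) ^ n * cbinom ((k u w : ℕ) : ℂ) n) •
        ∑ r ∈ Finset.range (k v w + 1), ((-1 : ℂ) ^ r * cbinom ((k v w : ℕ) : ℂ) r) •
          YM u ((p : ℤ) * ((k u v : ℤ) - (m : ℤ)) + (p : ℤ) * ((k u w : ℤ) - (n : ℤ)) - a - (p : ℤ))
            (YM v ((p : ℤ) * (m : ℤ) + (p : ℤ) * ((k v w : ℤ) - (r : ℤ)) - b - (p : ℤ))
              (YM w ((p : ℤ) * (n : ℤ) + (p : ℤ) * (r : ℤ) - c - (p : ℤ)) φ)) with hGdef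
  -- vanishing of G for very negative third argument
  have hGC : ∀ a b c : ℤ, c ≤ -(p : ℤ) - Nw → G a b c = 0 := by
    intro a b c hc
    simp only [hGdef]
    refine Finset.sum_eq_zero fun m _ => ?_
    have h2 : (∑ n ∈ Finset.range (k u w + 1), ((-1 : ℂ) ^ n * cbinom ((k u w : ℕ) : ℂ) n) •
        ∑ r ∈ Finset.range (k v w + 1), ((-1 : ℂ) ^ r * cbinom ((k v w : ℕ) : ℂ) r) •
          YM u ((p : ℤ) * ((k u v : ℤ) - (m : ℤ)) + (p : ℤ) * ((k u w : ℤ) - (n : ℤ)) - a - (p : ℤ))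
            (YM v ((p : ℤ) * (m : ℤ) + (p : ℤ) * ((k v w : ℤ) - (r : ℤ)) - b - (p : ℤ))
              (YM w ((p : ℤ) * (n : ℤ) + (p : ℤ) * (r : ℤ) - c - (p : ℤ)) φ))) = 0 := by
      refine Finset.sum_eq_zero fun n _ => ?_
      have h3 : (∑ r ∈ Finset.range (k v w + 1), ((-1 : ℂ) ^ r * cbinom ((k v w : ℕ) : ℂ) r) •
          YM u ((p : ℤ) * ((k u v : ℤ) - (m : ℤ)) + (p : ℤ) * ((k u w : ℤ) - (n : ℤ)) - a - (p : ℤ))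
            (YM v ((p : ℤ) * (m : ℤ) + (p : ℤ) * ((k v w : ℤ) - (r : ℤ)) - b - (p : ℤ))
              (YM w ((p : ℤ) * (n : ℤ) + (p : ℤ) * (r : ℤ) - c - (p : ℤ)) φ))) = 0 := by
        refine Finset.sum_eq_zero fun r _ => ?_
        rw [hNw ((p : ℤ) * (n : ℤ) + (p : ℤ) * (r : ℤ) - c - (p : ℤ))
          (by have := hptnn n; have := hptnn r; linarith), map_zero, map_zero, smul_zero]
      rw [h3, smul_zero]
    rw [h2, smul_zero]
  -- vanishing of G for very negative second argument (uses weak commutativity for (v,w))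
  have hGB : ∀ a b c : ℤ, b ≤ -(p : ℤ) - Nv → G a b c = 0 := by
    intro a b c hb
    simp only [hGdef]
    refine Finset.sum_eq_zero fun m _ => ?_
    have h2 : (∑ n ∈ Finset.range (k u w + 1), ((-1 : ℂ) ^ n * cbinom ((k u w : ℕ) : ℂ) n) •
        ∑ r ∈ Finset.range (k v w + 1), ((-1 : ℂ) ^ r * cbinom ((k v w : ℕ) : ℂ) r) •
          YM u ((p : ℤ) * ((k u v : ℤ) - (m : ℤ)) + (p : ℤ) * ((k u w : ℤ) - (n : ℤ)) - a - (p : ℤ))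
            (YM v ((p : ℤ) * (m : ℤ) + (p : ℤ) * ((k v w : ℤ) - (r : ℤ)) - b - (p : ℤ))
              (YM w ((p : ℤ) * (n : ℤ) + (p : ℤ) * (r : ℤ) - c - (p : ℤ)) φ))) = 0 := by
      refine Finset.sum_eq_zero fun n _ => ?_
      have hpull : (∑ r ∈ Finset.range (k v w + 1), ((-1 : ℂ) ^ r * cbinom ((k v w : ℕ) : ℂ) r) •
          YM u ((p : ℤ) * ((k u v : ℤ) - (m : ℤ)) + (p : ℤ) * ((k u w : ℤ) - (n : ℤ)) - a - (p : ℤ))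
            (YM v ((p : ℤ) * (m : ℤ) + (p : ℤ) * ((k v w : ℤ) - (r : ℤ)) - b - (p : ℤ))
              (YM w ((p : ℤ) * (n : ℤ) + (p : ℤ) * (r : ℤ) - c - (p : ℤ)) φ)))
          = YM u ((p : ℤ) * ((k u v : ℤ) - (m : ℤ)) + (p : ℤ) * ((k u w : ℤ) - (n : ℤ)) - a - (p : ℤ))
              (∑ r ∈ Finset.range (k v w + 1), ((-1 : ℂ) ^ r * cbinom ((k v w : ℕ) : ℂ) r) •
                YM v ((p : ℤ) * ((k v w : ℤ) - (r : ℤ)) - (b - (p : ℤ) * (m : ℤ)) - (p : ℤ))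
                  (YM w ((p : ℤ) * (r : ℤ) - (c - (p : ℤ) * (n : ℤ)) - (p : ℤ)) φ)) := by
        rw [map_sum]
        refine Finset.sum_congr rfl fun r _ => ?_
        rw [map_smul]
        rw [show (p : ℤ) * (m : ℤ) + (p : ℤ) * ((k v w : ℤ) - (r : ℤ)) - b - (p : ℤ)
            = (p : ℤ) * ((k v w : ℤ) - (r : ℤ)) - (b - (p : ℤ) * (m : ℤ)) - (p : ℤ) from by ring,
          show (p : ℤ) * (n : ℤ) + (p : ℤ) * (r : ℤ) - c - (p : ℤ)
            = (p : ℤ) * (r : ℤ) - (c - (p : ℤ) * (n : ℤ)) - (p : ℤ) from by ring]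
      rw [hpull, twwc_apply (hWC v w) (b - (p : ℤ) * (m : ℤ)) (c - (p : ℤ) * (n : ℤ)) φ]
      have hz : (∑ r ∈ Finset.range (k v w + 1), ((-1 : ℂ) ^ r * cbinom ((k v w : ℕ) : ℂ) r) •
          YM w ((p : ℤ) * (r : ℤ) - (c - (p : ℤ) * (n : ℤ)) - (p : ℤ))
            (YM v ((p : ℤ) * ((k v w : ℤ) - (r : ℤ)) - (b - (p : ℤ) * (m : ℤ)) - (p : ℤ)) φ)) = 0 := by
        refine Finset.sum_eq_zero fun r hr => ?_
        have hr' : (r : ℤ) ≤ (k v w : ℤ) := by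
          exact_mod_cast Nat.lt_succ_iff.1 (Finset.mem_range.1 hr)
        have h4 : (0 : ℤ) ≤ (p : ℤ) * ((k v w : ℤ) - (r : ℤ)) := mul_nonneg hppos (by omega)
        rw [hNv ((p : ℤ) * ((k v w : ℤ) - (r : ℤ)) - (b - (p : ℤ) * (m : ℤ)) - (p : ℤ))
          (by have := hptnn m; linarith), map_zero, smul_zero]
      rw [hz, map_zero, smul_zero]
    rw [h2, smul_zero]
  -- vanishing of G for very negative first argument (uses weak commutativity twice)
  have hGA : ∀ a b c : ℤ, a ≤ -(p : ℤ) - Nu → G a b c = 0 := by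
    intro a b c ha
    simp only [hGdef]
    -- step 0: reorder (m,n,r) → (n,r,m)
    rw [smul_swap (Finset.range (k u v + 1)) (Finset.range (k u w + 1))
      (fun m => ((-1 : ℂ) ^ m * cbinom ((k u v : ℕ) : ℂ) m)) (fun n => ((-1 : ℂ) ^ n * cbinom ((k u w : ℕ) : ℂ) n))
      (fun m n => ∑ r ∈ Finset.range (k v w + 1), ((-1 : ℂ) ^ r * cbinom ((k v w : ℕ) : ℂ) r) •
        YM u ((p : ℤ) * ((k u v : ℤ) - (m : ℤ)) + (p : ℤ) * ((k u w : ℤ) - (n : ℤ)) - a - (p : ℤ))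
              (YM v ((p : ℤ) * (m : ℤ) + (p : ℤ) * ((k v w : ℤ) - (r : ℤ)) - b - (p : ℤ))
                (YM w ((p : ℤ) * (n : ℤ) + (p : ℤ) * (r : ℤ) - c - (p : ℤ)) φ)))]
    have swap_mr : ∀ n : ℕ,
        (∑ m ∈ Finset.range (k u v + 1), ((-1 : ℂ) ^ m * cbinom ((k u v : ℕ) : ℂ) m) •
          ∑ r ∈ Finset.range (k v w + 1), ((-1 : ℂ) ^ r * cbinom ((k v w : ℕ) : ℂ) r) •
            YM u ((p : ℤ) * ((k u v : ℤ) - (m : ℤ)) + (p : ℤ) * ((k u w : ℤ) - (n : ℤ)) - a - (p : ℤ))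
              (YM v ((p : ℤ) * (m : ℤ) + (p : ℤ) * ((k v w : ℤ) - (r : ℤ)) - b - (p : ℤ))
                (YM w ((p : ℤ) * (n : ℤ) + (p : ℤ) * (r : ℤ) - c - (p : ℤ)) φ)))
        = ∑ r ∈ Finset.range (k v w + 1), ((-1 : ℂ) ^ r * cbinom ((k v w : ℕ) : ℂ) r) •
            ∑ m ∈ Finset.range (k u v + 1), ((-1 : ℂ) ^ m * cbinom ((k u v : ℕ) : ℂ) m) •
              YM u ((p : ℤ) * ((k u v : ℤ) - (m : ℤ)) + (p : ℤ) * ((k u w : ℤ) - (n : ℤ)) - a - (p : ℤ))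
              (YM v ((p : ℤ) * (m : ℤ) + (p : ℤ) * ((k v w : ℤ) - (r : ℤ)) - b - (p : ℤ))
                (YM w ((p : ℤ) * (n : ℤ) + (p : ℤ) * (r : ℤ) - c - (p : ℤ)) φ)) :=
      fun n => smul_swap (Finset.range (k u v + 1)) (Finset.range (k v w + 1))
        (fun m => ((-1 : ℂ) ^ m * cbinom ((k u v : ℕ) : ℂ) m)) (fun r => ((-1 : ℂ) ^ r * cbinom ((k v w : ℕ) : ℂ) r))
        (fun m r => YM u ((p : ℤ) * ((k u v : ℤ) - (m : ℤ)) + (p : ℤ) * ((k u w : ℤ) - (n : ℤ)) - a - (p : ℤ))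
              (YM v ((p : ℤ) * (m : ℤ) + (p : ℤ) * ((k v w : ℤ) - (r : ℤ)) - b - (p : ℤ))
                (YM w ((p : ℤ) * (n : ℤ) + (p : ℤ) * (r : ℤ) - c - (p : ℤ)) φ)))
    rw [Finset.sum_congr rfl fun n (_ : n ∈ Finset.range (k u w + 1)) =>
      congrArg (fun x => ((-1 : ℂ) ^ n * cbinom ((k u w : ℕ) : ℂ) n) • x) (swap_mr n)]
    -- step 1: swap u and v over the m-sum, for each fixed (n,r)
    have hswapuv : ∀ n r : ℕ,
        (∑ m ∈ Finset.range (k u v + 1), ((-1 : ℂ) ^ m * cbinom ((k u v : ℕ) : ℂ) m) •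
          YM u ((p : ℤ) * ((k u v : ℤ) - (m : ℤ)) + (p : ℤ) * ((k u w : ℤ) - (n : ℤ)) - a - (p : ℤ))
              (YM v ((p : ℤ) * (m : ℤ) + (p : ℤ) * ((k v w : ℤ) - (r : ℤ)) - b - (p : ℤ))
                (YM w ((p : ℤ) * (n : ℤ) + (p : ℤ) * (r : ℤ) - c - (p : ℤ)) φ)))
        = ∑ m ∈ Finset.range (k u v + 1), ((-1 : ℂ) ^ m * cbinom ((k u v : ℕ) : ℂ) m) •
            YM v ((p : ℤ) * (m : ℤ) - (b - (p : ℤ) * ((k v w : ℤ) - (r : ℤ))) - (p : ℤ))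
              (YM u ((p : ℤ) * ((k u v : ℤ) - (m : ℤ)) - (a - (p : ℤ) * ((k u w : ℤ) - (n : ℤ))) - (p : ℤ))
                (YM w ((p : ℤ) * (n : ℤ) + (p : ℤ) * (r : ℤ) - c - (p : ℤ)) φ)) := by
      intro n r
      rw [Finset.sum_congr rfl fun m (_ : m ∈ Finset.range (k u v + 1)) => by
        rw [show (p : ℤ) * ((k u v : ℤ) - (m : ℤ)) + (p : ℤ) * ((k u w : ℤ) - (n : ℤ)) - a - (p : ℤ) = (p : ℤ) * ((k u v : ℤ) - (m : ℤ)) - (a - (p : ℤ) * ((k u w : ℤ) - (n : ℤ))) - (p : ℤ) from by ring,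
          show (p : ℤ) * (m : ℤ) + (p : ℤ) * ((k v w : ℤ) - (r : ℤ)) - b - (p : ℤ) = (p : ℤ) * (m : ℤ) - (b - (p : ℤ) * ((k v w : ℤ) - (r : ℤ))) - (p : ℤ) from by ring]]
      exact twwc_apply (hWC u v) (a - (p : ℤ) * ((k u w : ℤ) - (n : ℤ)))
        (b - (p : ℤ) * ((k v w : ℤ) - (r : ℤ)))
        (YM w ((p : ℤ) * (n : ℤ) + (p : ℤ) * (r : ℤ) - c - (p : ℤ)) φ)
    rw [Finset.sum_congr rfl fun n (_ : n ∈ Finset.range (k u w + 1)) =>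
      congrArg (fun x => ((-1 : ℂ) ^ n * cbinom ((k u w : ℕ) : ℂ) n) • x)
        (Finset.sum_congr rfl fun r (_ : r ∈ Finset.range (k v w + 1)) =>
          congrArg (fun x => ((-1 : ℂ) ^ r * cbinom ((k v w : ℕ) : ℂ) r) • x) (hswapuv n r))]
    -- step 2: reorder (n,r,m) → (r,m,n)
    rw [smul_swap (Finset.range (k u w + 1)) (Finset.range (k v w + 1))
      (fun n => ((-1 : ℂ) ^ n * cbinom ((k u w : ℕ) : ℂ) n)) (fun r => ((-1 : ℂ) ^ r * cbinom ((k v w : ℕ) : ℂ) r))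
      (fun n r => ∑ m ∈ Finset.range (k u v + 1), ((-1 : ℂ) ^ m * cbinom ((k u v : ℕ) : ℂ) m) •
        YM v ((p : ℤ) * (m : ℤ) - (b - (p : ℤ) * ((k v w : ℤ) - (r : ℤ))) - (p : ℤ))
              (YM u ((p : ℤ) * ((k u v : ℤ) - (m : ℤ)) - (a - (p : ℤ) * ((k u w : ℤ) - (n : ℤ))) - (p : ℤ))
                (YM w ((p : ℤ) * (n : ℤ) + (p : ℤ) * (r : ℤ) - c - (p : ℤ)) φ)))]
    refine Finset.sum_eq_zero fun r _ => ?_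
    rw [smul_swap (Finset.range (k u w + 1)) (Finset.range (k u v + 1))
      (fun n => ((-1 : ℂ) ^ n * cbinom ((k u w : ℕ) : ℂ) n)) (fun m => ((-1 : ℂ) ^ m * cbinom ((k u v : ℕ) : ℂ) m))
      (fun n m => YM v ((p : ℤ) * (m : ℤ) - (b - (p : ℤ) * ((k v w : ℤ) - (r : ℤ))) - (p : ℤ))
              (YM u ((p : ℤ) * ((k u v : ℤ) - (m : ℤ)) - (a - (p : ℤ) * ((k u w : ℤ) - (n : ℤ))) - (p : ℤ))
                (YM w ((p : ℤ) * (n : ℤ) + (p : ℤ) * (r : ℤ) - c - (p : ℤ)) φ)))]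
    have hz : (∑ m ∈ Finset.range (k u v + 1), ((-1 : ℂ) ^ m * cbinom ((k u v : ℕ) : ℂ) m) •
        ∑ n ∈ Finset.range (k u w + 1), ((-1 : ℂ) ^ n * cbinom ((k u w : ℕ) : ℂ) n) •
          YM v ((p : ℤ) * (m : ℤ) - (b - (p : ℤ) * ((k v w : ℤ) - (r : ℤ))) - (p : ℤ))
              (YM u ((p : ℤ) * ((k u v : ℤ) - (m : ℤ)) - (a - (p : ℤ) * ((k u w : ℤ) - (n : ℤ))) - (p : ℤ))
                (YM w ((p : ℤ) * (n : ℤ) + (p : ℤ) * (r : ℤ) - c - (p : ℤ)) φ))) = 0 := by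
      refine Finset.sum_eq_zero fun m hm => ?_
      -- pull YM v out of the n-sum
      have hpull : (∑ n ∈ Finset.range (k u w + 1), ((-1 : ℂ) ^ n * cbinom ((k u w : ℕ) : ℂ) n) •
          YM v ((p : ℤ) * (m : ℤ) - (b - (p : ℤ) * ((k v w : ℤ) - (r : ℤ))) - (p : ℤ))
              (YM u ((p : ℤ) * ((k u v : ℤ) - (m : ℤ)) - (a - (p : ℤ) * ((k u w : ℤ) - (n : ℤ))) - (p : ℤ))
                (YM w ((p : ℤ) * (n : ℤ) + (p : ℤ) * (r : ℤ) - c - (p : ℤ)) φ)))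
          = YM v ((p : ℤ) * (m : ℤ) - (b - (p : ℤ) * ((k v w : ℤ) - (r : ℤ))) - (p : ℤ))
              (∑ n ∈ Finset.range (k u w + 1), ((-1 : ℂ) ^ n * cbinom ((k u w : ℕ) : ℂ) n) •
                YM u ((p : ℤ) * ((k u w : ℤ) - (n : ℤ)) - (a - (p : ℤ) * ((k u v : ℤ) - (m : ℤ))) - (p : ℤ))
                  (YM w ((p : ℤ) * (n : ℤ) - (c - (p : ℤ) * (r : ℤ)) - (p : ℤ)) φ)) := by
        rw [map_sum]
        refine Finset.sum_congr rfl fun n _ => ?_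
        rw [map_smul]
        rw [show (p : ℤ) * ((k u v : ℤ) - (m : ℤ)) - (a - (p : ℤ) * ((k u w : ℤ) - (n : ℤ))) - (p : ℤ) = (p : ℤ) * ((k u w : ℤ) - (n : ℤ)) - (a - (p : ℤ) * ((k u v : ℤ) - (m : ℤ))) - (p : ℤ) from by ring,
          show (p : ℤ) * (n : ℤ) + (p : ℤ) * (r : ℤ) - c - (p : ℤ) = (p : ℤ) * (n : ℤ) - (c - (p : ℤ) * (r : ℤ)) - (p : ℤ) from by ring]
      rw [hpull, twwc_apply (hWC u w) (a - (p : ℤ) * ((k u v : ℤ) - (m : ℤ)))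
        (c - (p : ℤ) * (r : ℤ)) φ]
      have hz2 : (∑ n ∈ Finset.range (k u w + 1), ((-1 : ℂ) ^ n * cbinom ((k u w : ℕ) : ℂ) n) •
          YM w ((p : ℤ) * (n : ℤ) - (c - (p : ℤ) * (r : ℤ)) - (p : ℤ))
            (YM u ((p : ℤ) * ((k u w : ℤ) - (n : ℤ)) - (a - (p : ℤ) * ((k u v : ℤ) - (m : ℤ))) - (p : ℤ)) φ)) = 0 := by
        refine Finset.sum_eq_zero fun n hn => ?_
        have hm' : (m : ℤ) ≤ (k u v : ℤ) := by
          exact_mod_cast Nat.lt_succ_iff.1 (Finset.mem_range.1 hm)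
        have hn' : (n : ℤ) ≤ (k u w : ℤ) := by
          exact_mod_cast Nat.lt_succ_iff.1 (Finset.mem_range.1 hn)
        have h4 : (0 : ℤ) ≤ (p : ℤ) * ((k u v : ℤ) - (m : ℤ)) := mul_nonneg hppos (by omega)
        have h5 : (0 : ℤ) ≤ (p : ℤ) * ((k u w : ℤ) - (n : ℤ)) := mul_nonneg hppos (by omega)
        rw [hNu ((p : ℤ) * ((k u w : ℤ) - (n : ℤ)) - (a - (p : ℤ) * ((k u v : ℤ) - (m : ℤ))) - (p : ℤ)) (by linarith), map_zero, smul_zero]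
      rw [hz2, map_zero, smul_zero]
    rw [hz, smul_zero]
  -- the series F
  set F : ℤ → ℤ → ℤ → ℤ → ℤ → ℤ → M := fun n0 n4 n5 N1 N2 N3 =>
    if n0 = -(k u v : ℤ) ∧ n4 = -(k u w : ℤ) ∧ n5 = -(k v w : ℤ) then G N1 N2 N3 else 0
    with hFdef
  refine ⟨F, ?_, ?_, ?_, ?_, ?_⟩
  · -- TwIsLaurent6
    refine ⟨(max (max (max (k u v : ℤ) (k u w : ℤ)) (k v w : ℤ))
      (max (max ((p : ℤ) + Nu) ((p : ℤ) + Nv)) ((p : ℤ) + Nw))).toNat, ?_⟩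
    intro n0 n4 n5 N1 N2 N3 hcase
    set Nb : ℤ := ((max (max (max (k u v : ℤ) (k u w : ℤ)) (k v w : ℤ))
      (max (max ((p : ℤ) + Nu) ((p : ℤ) + Nv)) ((p : ℤ) + Nw))).toNat : ℤ) with hNb
    have hb1 : (k u v : ℤ) ≤ Nb := by rw [hNb]; omega
    have hb2 : (k u w : ℤ) ≤ Nb := by rw [hNb]; omega
    have hb3 : (k v w : ℤ) ≤ Nb := by rw [hNb]; omega
    have hb4 : (p : ℤ) + Nu ≤ Nb := by rw [hNb]; omega
    have hb5 : (p : ℤ) + Nv ≤ Nb := by rw [hNb]; omega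
    have hb6 : (p : ℤ) + Nw ≤ Nb := by rw [hNb]; omega
    simp only [hFdef]
    by_cases hcond : n0 = -(k u v : ℤ) ∧ n4 = -(k u w : ℤ) ∧ n5 = -(k v w : ℤ)
    · rw [if_pos hcond]
      obtain ⟨h0, h4', h5'⟩ := hcond
      rcases hcase with h | h | h | h | h | h
      · omega
      · omega
      · omega
      · exact hGA _ _ _ (by omega)
      · exact hGB _ _ _ (by omega)
      · exact hGC _ _ _ (by omega)
    · rw [if_neg hcond]
  · intro n0 n4 n5 N1 N2 N3 h
    simp only [hFdef]
    rw [if_neg]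
    rintro ⟨h1, -, -⟩
    omega
  · intro n0 n4 n5 N1 N2 N3 h
    simp only [hFdef]
    rw [if_neg]
    rintro ⟨-, h1, -⟩
    omega
  · intro n0 n4 n5 N1 N2 N3 h
    simp only [hFdef]
    rw [if_neg]
    rintro ⟨-, -, h1⟩
    omega
  · -- the substitution identity
    intro A B C
    -- bounds
    obtain ⟨Jb, hJb⟩ : ∃ Jb : ℕ, Nw + C + (p : ℤ) ≤ (Jb : ℤ) :=
      ⟨(Nw + C + (p : ℤ)).toNat, by omega⟩
    obtain ⟨M0, hM0⟩ : ∃ M0 : ℕ, ∀ t z : ℕ, ∀ n : ℤ,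
        (M0 : ℤ) ≤ n → t < Jb + k u w + 1 → z < Jb + k v w + 1 →
        YM v n (YM w ((p : ℤ) * (t : ℤ) + (p : ℤ) * (z : ℤ) - C - (p : ℤ)) φ) = 0 := by
      refine ⟨((Finset.range (Jb + k u w + 1)) ×ˢ (Finset.range (Jb + k v w + 1))).sup
        (fun tz => (Classical.choose (hT v (YM w
          ((p : ℤ) * (tz.1 : ℤ) + (p : ℤ) * (tz.2 : ℤ) - C - (p : ℤ)) φ))).toNat), ?_⟩
      intro t z n hn ht hz
      apply Classical.choose_spec (hT v (YM w
        ((p : ℤ) * (t : ℤ) + (p : ℤ) * (z : ℤ) - C - (p : ℤ)) φ))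
      have hmem : (t, z) ∈ (Finset.range (Jb + k u w + 1)) ×ˢ (Finset.range (Jb + k v w + 1)) :=
        Finset.mem_product.2 ⟨Finset.mem_range.2 ht, Finset.mem_range.2 hz⟩
      have hle := Finset.le_sup (f := fun tz : ℕ × ℕ => (Classical.choose (hT v (YM w
          ((p : ℤ) * (tz.1 : ℤ) + (p : ℤ) * (tz.2 : ℤ) - C - (p : ℤ)) φ))).toNat) hmem
      have h2 := Int.self_le_toNat (Classical.choose (hT v (YM w
        ((p : ℤ) * (t : ℤ) + (p : ℤ) * (z : ℤ) - C - (p : ℤ)) φ)))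
      have h3 := (Nat.cast_le (α := ℤ)).2 hle
      beta_reduce at h3
      omega
    obtain ⟨Ib, hIb1, hIb2⟩ : ∃ Ib : ℕ,
        B + (p : ℤ) * (k v w : ℤ) + (p : ℤ) * (Jb : ℤ) + (p : ℤ) + Nv ≤ (Ib : ℤ) ∧
        (M0 : ℤ) + (p : ℤ) * ((Jb : ℤ) + (k v w : ℤ)) + B + (p : ℤ) ≤ (Ib : ℤ) :=
      ⟨(max (B + (p : ℤ) * (k v w : ℤ) + (p : ℤ) * (Jb : ℤ) + (p : ℤ) + Nv)
        ((M0 : ℤ) + (p : ℤ) * ((Jb : ℤ) + (k v w : ℤ)) + B + (p : ℤ))).toNat,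
        by omega, by omega⟩
    -- the triple-product coefficients
    set Q : ℕ → ℕ → ℕ → M := fun s t z =>
      YM u (-(A + (p : ℤ) * (s : ℤ) + (p : ℤ) * (t : ℤ)) - (p : ℤ))
        (YM v (-(B - (p : ℤ) * (s : ℤ) + (p : ℤ) * (z : ℤ)) - (p : ℤ))
          (YM w (-(C - (p : ℤ) * (t : ℤ) - (p : ℤ) * (z : ℤ)) - (p : ℤ)) φ)) with hQdef
    have hQt : ∀ s t z : ℕ, Jb < t → Q s t z = 0 := by
      intro s t z ht
      have ht' : (Jb : ℤ) < (t : ℤ) := by exact_mod_cast ht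
      simp only [hQdef]
      rw [hNw (-(C - (p : ℤ) * (t : ℤ) - (p : ℤ) * (z : ℤ)) - (p : ℤ))
        (by have := hpt t; have := hptnn z; linarith), map_zero, map_zero]
    have hQz : ∀ s t z : ℕ, Jb < z → Q s t z = 0 := by
      intro s t z hz
      have hz' : (Jb : ℤ) < (z : ℤ) := by exact_mod_cast hz
      simp only [hQdef]
      rw [hNw (-(C - (p : ℤ) * (t : ℤ) - (p : ℤ) * (z : ℤ)) - (p : ℤ))
        (by have := hpt z; have := hptnn t; linarith), map_zero, map_zero]
    have hQs : ∀ s t z : ℕ, t ≤ Jb + k u w → z ≤ Jb + k v w → Ib < s → Q s t z = 0 := by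
      intro s t z htJ hzJ hs
      simp only [hQdef]
      rw [show -(C - (p : ℤ) * (t : ℤ) - (p : ℤ) * (z : ℤ)) - (p : ℤ)
        = (p : ℤ) * (t : ℤ) + (p : ℤ) * (z : ℤ) - C - (p : ℤ) from by ring]
      have hvz : YM v (-(B - (p : ℤ) * (s : ℤ) + (p : ℤ) * (z : ℤ)) - (p : ℤ))
          (YM w ((p : ℤ) * (t : ℤ) + (p : ℤ) * (z : ℤ) - C - (p : ℤ)) φ) = 0 := by
        apply hM0 t z _ _ (by omega) (by omega)
        have h1 := hpt s
        have h2 : (p : ℤ) * (z : ℤ) ≤ (p : ℤ) * ((Jb : ℤ) + (k v w : ℤ)) := by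
          apply mul_le_mul_of_nonneg_left ?_ hppos
          exact_mod_cast hzJ
        have h3 : (Ib : ℤ) < (s : ℤ) := by exact_mod_cast hs
        linarith
      rw [hvz, map_zero]
    -- the support finset
    set S : Finset ((ℤ × ℤ × ℤ) × ℕ × ℕ × ℕ) :=
      ({(-(k u v : ℤ), -(k u w : ℤ), -(k v w : ℤ))} : Finset (ℤ × ℤ × ℤ)) ×ˢ
        (Finset.range (Ib + 1) ×ˢ Finset.range (Jb + 1) ×ˢ Finset.range (Jb + 1)) with hSdef
    have hsupp : (Function.support fun q : (ℤ × ℤ × ℤ) × ℕ × ℕ × ℕ =>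
        ((-1 : ℂ) ^ (q.2.1 + q.2.2.1 + q.2.2.2) *
          cbinom (q.1.1 : ℂ) q.2.1 * cbinom (q.1.2.1 : ℂ) q.2.2.1 *
          cbinom (q.1.2.2 : ℂ) q.2.2.2) •
        F q.1.1 q.1.2.1 q.1.2.2
          (A - (p : ℤ) * (q.1.1 - q.2.1) - (p : ℤ) * (q.1.2.1 - q.2.2.1))
          (B - (p : ℤ) * q.2.1 - (p : ℤ) * (q.1.2.2 - q.2.2.2))
          (C - (p : ℤ) * q.2.2.1 - (p : ℤ) * q.2.2.2)) ⊆ (S : Set _) := by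
      rintro ⟨⟨a0, a4, a5⟩, i, j, l⟩ hq
      simp only [Function.mem_support, ne_eq] at hq
      by_contra hqS
      apply hq
      by_cases hcond : a0 = -(k u v : ℤ) ∧ a4 = -(k u w : ℤ) ∧ a5 = -(k v w : ℤ)
      · obtain ⟨rfl, rfl, rfl⟩ := hcond
        have hbox : ¬ (i < Ib + 1 ∧ j < Jb + 1 ∧ l < Jb + 1) := by
          intro hb
          apply hqS
          rw [Finset.mem_coe, hSdef]
          exact Finset.mem_product.2 ⟨Finset.mem_singleton.2 rfl,
            Finset.mem_product.2 ⟨Finset.mem_range.2 hb.1,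
              Finset.mem_product.2 ⟨Finset.mem_range.2 hb.2.1, Finset.mem_range.2 hb.2.2⟩⟩⟩
        have hF0 : F (-(k u v : ℤ)) (-(k u w : ℤ)) (-(k v w : ℤ))
            (A - (p : ℤ) * (-(k u v : ℤ) - (i : ℤ)) - (p : ℤ) * (-(k u w : ℤ) - (j : ℤ)))
            (B - (p : ℤ) * (i : ℤ) - (p : ℤ) * (-(k v w : ℤ) - (l : ℤ)))
            (C - (p : ℤ) * (j : ℤ) - (p : ℤ) * (l : ℤ)) = 0 := by
          simp only [hFdef]
          split_ifs with hsplit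
          swap
          · rfl
          by_cases hj : j ≤ Jb
          · by_cases hl : l ≤ Jb
            · have hi : Ib < i := by omega
              apply hGB
              rw [show B - (p : ℤ) * (i : ℤ) - (p : ℤ) * (-(k v w : ℤ) - (l : ℤ))
                = B - (p : ℤ) * (i : ℤ) + (p : ℤ) * (k v w : ℤ) + (p : ℤ) * (l : ℤ) from by ring]
              have h1 := hpt i
              have h2 : (p : ℤ) * (l : ℤ) ≤ (p : ℤ) * (Jb : ℤ) := hptz l Jb hl
              have h3 : (Ib : ℤ) < (i : ℤ) := by exact_mod_cast hi
              linarith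
            · apply hGC
              have h1 := hpt l
              have h2 := hptnn j
              have h3 : (Jb : ℤ) < (l : ℤ) := by exact_mod_cast (by omega : Jb < l)
              linarith
          · apply hGC
            have h1 := hpt j
            have h2 := hptnn l
            have h3 : (Jb : ℤ) < (j : ℤ) := by exact_mod_cast (by omega : Jb < j)
            linarith
        rw [hF0, smul_zero]
      · have hF0 : F a0 a4 a5
            (A - (p : ℤ) * (a0 - (i : ℤ)) - (p : ℤ) * (a4 - (j : ℤ)))
            (B - (p : ℤ) * (i : ℤ) - (p : ℤ) * (a5 - (l : ℤ)))
            (C - (p : ℤ) * (j : ℤ) - (p : ℤ) * (l : ℤ)) = 0 := by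
          simp only [hFdef]
          rw [if_neg hcond]
        rw [hF0, smul_zero]
    rw [finsum_eq_sum_of_support_subset _ hsupp]
    rw [hSdef]
    simp only [Finset.sum_product, Finset.sum_singleton]
    have hGQ : ∀ i j l : ℕ,
        G (A - (p : ℤ) * (-(k u v : ℤ) - (i : ℤ)) - (p : ℤ) * (-(k u w : ℤ) - (j : ℤ))) (B - (p : ℤ) * (i : ℤ) - (p : ℤ) * (-(k v w : ℤ) - (l : ℤ))) (C - (p : ℤ) * (j : ℤ) - (p : ℤ) * (l : ℤ))
          = ∑ m ∈ Finset.range (k u v + 1), ((-1 : ℂ) ^ m * cbinom ((k u v : ℕ) : ℂ) m) •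
              ∑ n ∈ Finset.range (k u w + 1), ((-1 : ℂ) ^ n * cbinom ((k u w : ℕ) : ℂ) n) •
                ∑ r ∈ Finset.range (k v w + 1), ((-1 : ℂ) ^ r * cbinom ((k v w : ℕ) : ℂ) r) • Q (i + m) (j + n) (l + r) := by
      intro i j l
      simp only [hGdef, hQdef]
      refine Finset.sum_congr rfl fun m _ => ?_
      congr 1
      refine Finset.sum_congr rfl fun n _ => ?_
      congr 1
      refine Finset.sum_congr rfl fun r _ => ?_
      congr 1
      rw [show (p : ℤ) * ((k u v : ℤ) - (m : ℤ)) + (p : ℤ) * ((k u w : ℤ) - (n : ℤ)) - (A - (p : ℤ) * (-(k u v : ℤ) - (i : ℤ)) - (p : ℤ) * (-(k u w : ℤ) - (j : ℤ))) - (p : ℤ) = -(A + (p : ℤ) * ((i + m : ℕ) : ℤ) + (p : ℤ) * ((j + n : ℕ) : ℤ)) - (p : ℤ) from by push_cast; ring,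
        show (p : ℤ) * (m : ℤ) + (p : ℤ) * ((k v w : ℤ) - (r : ℤ)) - (B - (p : ℤ) * (i : ℤ) - (p : ℤ) * (-(k v w : ℤ) - (l : ℤ))) - (p : ℤ) = -(B - (p : ℤ) * ((i + m : ℕ) : ℤ) + (p : ℤ) * ((l + r : ℕ) : ℤ)) - (p : ℤ) from by push_cast; ring,
        show (p : ℤ) * (n : ℤ) + (p : ℤ) * (r : ℤ) - (C - (p : ℤ) * (j : ℤ) - (p : ℤ) * (l : ℤ)) - (p : ℤ) = -(C - (p : ℤ) * ((j + n : ℕ) : ℤ) - (p : ℤ) * ((l + r : ℕ) : ℤ)) - (p : ℤ) from by push_cast; ring]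
    have hterm : ∀ i j l : ℕ,
        ((-1 : ℂ) ^ (i + j + l) * cbinom ((-(k u v : ℤ) : ℤ) : ℂ) i *
          cbinom ((-(k u w : ℤ) : ℤ) : ℂ) j * cbinom ((-(k v w : ℤ) : ℤ) : ℂ) l) •
          F (-(k u v : ℤ)) (-(k u w : ℤ)) (-(k v w : ℤ))
            (A - (p : ℤ) * (-(k u v : ℤ) - (i : ℤ)) - (p : ℤ) * (-(k u w : ℤ) - (j : ℤ))) (B - (p : ℤ) * (i : ℤ) - (p : ℤ) * (-(k v w : ℤ) - (l : ℤ))) (C - (p : ℤ) * (j : ℤ) - (p : ℤ) * (l : ℤ))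
          = ((-1 : ℂ) ^ i * cbinom (-((k u v : ℕ) : ℂ)) i) • (((-1 : ℂ) ^ j * cbinom (-((k u w : ℕ) : ℂ)) j) • (((-1 : ℂ) ^ l * cbinom (-((k v w : ℕ) : ℂ)) l) •
              (∑ m ∈ Finset.range (k u v + 1), ((-1 : ℂ) ^ m * cbinom ((k u v : ℕ) : ℂ) m) •
              ∑ n ∈ Finset.range (k u w + 1), ((-1 : ℂ) ^ n * cbinom ((k u w : ℕ) : ℂ) n) •
                ∑ r ∈ Finset.range (k v w + 1), ((-1 : ℂ) ^ r * cbinom ((k v w : ℕ) : ℂ) r) • Q (i + m) (j + n) (l + r)))) := by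
      intro i j l
      simp only [hFdef]
      split_ifs with hsplit
      · rw [hGQ i j l, smul_smul, smul_smul]
        congr 1
        push_cast
        ring
      · exact absurd (by simp) hsplit
    calc YM u (-A - (p : ℤ)) (YM v (-B - (p : ℤ)) (YM w (-C - (p : ℤ)) φ)) = Q 0 0 0 := by
          simp only [hQdef]
          norm_num
      _ = _ := ?_
    symm
    rw [Finset.sum_congr rfl fun i (_ : i ∈ Finset.range (Ib + 1)) =>
      Finset.sum_congr rfl fun j (_ : j ∈ Finset.range (Jb + 1)) =>
        Finset.sum_congr rfl fun l (_ : l ∈ Finset.range (Jb + 1)) => hterm i j l]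
    have hps : ∀ i : ℕ,
        (∑ j ∈ Finset.range (Jb + 1), ∑ l ∈ Finset.range (Jb + 1),
          ((-1 : ℂ) ^ i * cbinom (-((k u v : ℕ) : ℂ)) i) • (((-1 : ℂ) ^ j * cbinom (-((k u w : ℕ) : ℂ)) j) • (((-1 : ℂ) ^ l * cbinom (-((k v w : ℕ) : ℂ)) l) •
            (∑ m ∈ Finset.range (k u v + 1), ((-1 : ℂ) ^ m * cbinom ((k u v : ℕ) : ℂ) m) •
              ∑ n ∈ Finset.range (k u w + 1), ((-1 : ℂ) ^ n * cbinom ((k u w : ℕ) : ℂ) n) •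
                ∑ r ∈ Finset.range (k v w + 1), ((-1 : ℂ) ^ r * cbinom ((k v w : ℕ) : ℂ) r) • Q (i + m) (j + n) (l + r)))))
        = ((-1 : ℂ) ^ i * cbinom (-((k u v : ℕ) : ℂ)) i) • ∑ j ∈ Finset.range (Jb + 1), ((-1 : ℂ) ^ j * cbinom (-((k u w : ℕ) : ℂ)) j) •
            ∑ l ∈ Finset.range (Jb + 1), ((-1 : ℂ) ^ l * cbinom (-((k v w : ℕ) : ℂ)) l) •
              (∑ m ∈ Finset.range (k u v + 1), ((-1 : ℂ) ^ m * cbinom ((k u v : ℕ) : ℂ) m) •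
              ∑ n ∈ Finset.range (k u w + 1), ((-1 : ℂ) ^ n * cbinom ((k u w : ℕ) : ℂ) n) •
                ∑ r ∈ Finset.range (k v w + 1), ((-1 : ℂ) ^ r * cbinom ((k v w : ℕ) : ℂ) r) • Q (i + m) (j + n) (l + r)) := by
      intro i
      simp only [Finset.smul_sum]
    rw [Finset.sum_congr rfl fun i (_ : i ∈ Finset.range (Ib + 1)) => hps i]
    rw [six_collapse Ib Jb Jb (k u v) (k u w) (k v w)
      (fun i : ℕ => (-1 : ℂ) ^ i * cbinom (-((k u v : ℕ) : ℂ)) i) (fun j : ℕ => (-1 : ℂ) ^ j * cbinom (-((k u w : ℕ) : ℂ)) j) (fun l : ℕ => (-1 : ℂ) ^ l * cbinom (-((k v w : ℕ) : ℂ)) l)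
      (fun m : ℕ => (-1 : ℂ) ^ m * cbinom ((k u v : ℕ) : ℂ) m) (fun n : ℕ => (-1 : ℂ) ^ n * cbinom ((k u w : ℕ) : ℂ) n) (fun r : ℕ => (-1 : ℂ) ^ r * cbinom ((k v w : ℕ) : ℂ) r) Q]
    have hside1 : ∀ s ∈ Finset.range (Ib + (k u v) + 1), s ≠ 0 →
        (Acoef Ib (k u v) (fun i : ℕ => (-1 : ℂ) ^ i * cbinom (-((k u v : ℕ) : ℂ)) i) (fun m : ℕ => (-1 : ℂ) ^ m * cbinom ((k u v : ℕ) : ℂ) m) s) •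
          (∑ t ∈ Finset.range (Jb + (k u w) + 1),
            (Acoef Jb (k u w) (fun j : ℕ => (-1 : ℂ) ^ j * cbinom (-((k u w : ℕ) : ℂ)) j) (fun n : ℕ => (-1 : ℂ) ^ n * cbinom ((k u w : ℕ) : ℂ) n) t) •
              ∑ z ∈ Finset.range (Jb + (k v w) + 1),
                (Acoef Jb (k v w) (fun l : ℕ => (-1 : ℂ) ^ l * cbinom (-((k v w : ℕ) : ℂ)) l) (fun r : ℕ => (-1 : ℂ) ^ r * cbinom ((k v w : ℕ) : ℂ) r) z) • Q s t z) = 0 := by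
      intro s _ hs0
      by_cases hsI : s ≤ Ib
      · rw [Acoef_delta Ib (k u v) s hsI, if_neg hs0, zero_smul]
      · have h0 : (∑ t ∈ Finset.range (Jb + (k u w) + 1),
            (Acoef Jb (k u w) (fun j : ℕ => (-1 : ℂ) ^ j * cbinom (-((k u w : ℕ) : ℂ)) j) (fun n : ℕ => (-1 : ℂ) ^ n * cbinom ((k u w : ℕ) : ℂ) n) t) •
              ∑ z ∈ Finset.range (Jb + (k v w) + 1),
                (Acoef Jb (k v w) (fun l : ℕ => (-1 : ℂ) ^ l * cbinom (-((k v w : ℕ) : ℂ)) l) (fun r : ℕ => (-1 : ℂ) ^ r * cbinom ((k v w : ℕ) : ℂ) r) z) • Q s t z) = 0 := by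
          refine Finset.sum_eq_zero fun t ht => ?_
          have ht' : t ≤ Jb + k u w := by have := Finset.mem_range.1 ht; omega
          have h1 : (∑ z ∈ Finset.range (Jb + (k v w) + 1),
              (Acoef Jb (k v w) (fun l : ℕ => (-1 : ℂ) ^ l * cbinom (-((k v w : ℕ) : ℂ)) l) (fun r : ℕ => (-1 : ℂ) ^ r * cbinom ((k v w : ℕ) : ℂ) r) z) • Q s t z) = 0 := by
            refine Finset.sum_eq_zero fun z hz => ?_
            have hz' : z ≤ Jb + k v w := by have := Finset.mem_range.1 hz; omega
            rw [hQs s t z ht' hz' (by omega), smul_zero]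
          rw [h1, smul_zero]
        rw [h0, smul_zero]
    rw [Finset.sum_eq_single_of_mem 0 (Finset.mem_range.2 (Nat.succ_pos _)) hside1]
    rw [Acoef_delta Ib (k u v) 0 (Nat.zero_le _), if_pos rfl, one_smul]
    have hside2 : ∀ t ∈ Finset.range (Jb + (k u w) + 1), t ≠ 0 →
        (Acoef Jb (k u w) (fun j : ℕ => (-1 : ℂ) ^ j * cbinom (-((k u w : ℕ) : ℂ)) j) (fun n : ℕ => (-1 : ℂ) ^ n * cbinom ((k u w : ℕ) : ℂ) n) t) •
          (∑ z ∈ Finset.range (Jb + (k v w) + 1),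
            (Acoef Jb (k v w) (fun l : ℕ => (-1 : ℂ) ^ l * cbinom (-((k v w : ℕ) : ℂ)) l) (fun r : ℕ => (-1 : ℂ) ^ r * cbinom ((k v w : ℕ) : ℂ) r) z) • Q 0 t z) = 0 := by
      intro t _ ht0
      by_cases htJ : t ≤ Jb
      · rw [Acoef_delta Jb (k u w) t htJ, if_neg ht0, zero_smul]
      · have h1 : (∑ z ∈ Finset.range (Jb + (k v w) + 1),
            (Acoef Jb (k v w) (fun l : ℕ => (-1 : ℂ) ^ l * cbinom (-((k v w : ℕ) : ℂ)) l) (fun r : ℕ => (-1 : ℂ) ^ r * cbinom ((k v w : ℕ) : ℂ) r) z) • Q 0 t z) = 0 := by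
          refine Finset.sum_eq_zero fun z hz => ?_
          rw [hQt 0 t z (by omega), smul_zero]
        rw [h1, smul_zero]
    rw [Finset.sum_eq_single_of_mem 0 (Finset.mem_range.2 (Nat.succ_pos _)) hside2]
    rw [Acoef_delta Jb (k u w) 0 (Nat.zero_le _), if_pos rfl, one_smul]
    have hside3 : ∀ z ∈ Finset.range (Jb + (k v w) + 1), z ≠ 0 →
        (Acoef Jb (k v w) (fun l : ℕ => (-1 : ℂ) ^ l * cbinom (-((k v w : ℕ) : ℂ)) l) (fun r : ℕ => (-1 : ℂ) ^ r * cbinom ((k v w : ℕ) : ℂ) r) z) • Q 0 0 z = 0 := by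
      intro z _ hz0
      by_cases hzJ : z ≤ Jb
      · rw [Acoef_delta Jb (k v w) z hzJ, if_neg hz0, zero_smul]
      · rw [hQz 0 0 z (by omega), smul_zero]
    rw [Finset.sum_eq_single_of_mem 0 (Finset.mem_range.2 (Nat.succ_pos _)) hside3]
    rw [Acoef_delta Jb (k v w) 0 (Nat.zero_le _), if_pos rfl, one_smul]





end S10
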